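/- Let σ : ℝ → ℝ be continuously differentiable with σ'(t) → 1 as t → ∞ and σ'(t) → 0 as t → −∞. For θ, b > 0 define f(x; θ, b) = (σ(θ(x+b)) − σ(θ(x−b)))/θ − b. If additionally σ(x) = xΦ(x) with Φ(x) + Φ(−x) = 1, then f(0; θ, b) = 0 for all θ, b > 0, and for every ε > 0 and R > 0 there exist θ, b > 0 such that sup_{x ∈ [−R,R]} |f(x; θ, b) − x| ≤ ε and sup_{x ∈ [−R,R]} |f'(x; θ, b) − 1| ≤ ε. -/

import Mathlib

open Filter

/-- The clipping function `f(x; θ, b) = (σ(θ(x+b)) − σ(θ(x−b)))/θ − b`. -/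
noncomputable def fclip (σ : ℝ → ℝ) (θ b x : ℝ) : ℝ :=
  (σ (θ * (x + b)) - σ (θ * (x - b))) / θ - b

lemma fclip_hasDerivAt (σ : ℝ → ℝ) (hσ : Differentiable ℝ σ) {θ : ℝ} (hθ : θ ≠ 0)
    (b x : ℝ) :
    HasDerivAt (fclip σ θ b) (deriv σ (θ * (x + b)) - deriv σ (θ * (x - b))) x := by
  have h1 : HasDerivAt (fun x : ℝ => θ * (x + b)) θ x := by
    simpa using ((hasDerivAt_id x).add_const b).const_mul θ
  have h2 : HasDerivAt (fun x : ℝ => θ * (x - b)) θ x := by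
    simpa using ((hasDerivAt_id x).sub_const b).const_mul θ
  have H1 := ((hσ (θ * (x + b))).hasDerivAt).comp x h1
  have H2 := ((hσ (θ * (x - b))).hasDerivAt).comp x h2
  have H := ((H1.sub H2).div_const θ).sub_const b
  have : (deriv σ (θ * (x + b)) * θ - deriv σ (θ * (x - b)) * θ) / θ =
      deriv σ (θ * (x + b)) - deriv σ (θ * (x - b)) := by
    field_simp
  rw [← this]
  exact H

/-- For a GELU-like activation `σ(x) = xΦ(x)` with `Φ(x)+Φ(−x)=1` and
`σ'(t) → 1` at `+∞`, `σ'(t) → 0` at `−∞`: the clipping function vanishes at `0`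
for all `θ, b > 0`, and for every `ε, R > 0` there exist `θ, b > 0` such that
`f(·;θ,b)` approximates the identity in `C¹` on `[−R,R]` to within `ε`. -/
theorem stmt4 (σ Φ : ℝ → ℝ) (hσ : ContDiff ℝ 1 σ)
    (hσdef : ∀ x, σ x = x * Φ x) (hΦsym : ∀ x, Φ x + Φ (-x) = 1)
    (hdtop : Tendsto (deriv σ) atTop (nhds 1))
    (hdbot : Tendsto (deriv σ) atBot (nhds 0)) :
    (∀ θ b : ℝ, 0 < θ → 0 < b → fclip σ θ b 0 = 0) ∧
    ∀ ε > (0 : ℝ), ∀ R > (0 : ℝ), ∃ θ b : ℝ, 0 < θ ∧ 0 < b ∧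
      (∀ x ∈ Set.Icc (-R) R, |fclip σ θ b x - x| ≤ ε) ∧
      (∀ x ∈ Set.Icc (-R) R, |deriv (fclip σ θ b) x - 1| ≤ ε) := by
  have hdiff : Differentiable ℝ σ := hσ.differentiable one_ne_zero
  have h0 : ∀ θ b : ℝ, 0 < θ → 0 < b → fclip σ θ b 0 = 0 := by
    intro θ b hθ hb
    have key : σ (θ * (0 + b)) - σ (θ * (0 - b)) = θ * b := by
      rw [hσdef, hσdef]
      have h := hΦsym (θ * b)
      have e1 : θ * (0 - b) = -(θ * b) := by ring
      have e2 : θ * (0 + b) = θ * b := by ring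
      rw [e1, e2]
      linear_combination (θ * b) * h
    unfold fclip
    rw [key]
    field_simp
    ring
  refine ⟨h0, ?_⟩
  intro ε hε R hR
  set δ : ℝ := ε / (2 * max R 1) with hδdef
  have hmax : (0:ℝ) < max R 1 := lt_of_lt_of_le one_pos (le_max_right R 1)
  have hδpos : 0 < δ := div_pos hε (by positivity)
  obtain ⟨T1, hT1⟩ := eventually_atTop.mp
    (hdtop.eventually (Metric.closedBall_mem_nhds 1 hδpos))
  obtain ⟨T2, hT2⟩ := eventually_atBot.mp
    (hdbot.eventually (Metric.closedBall_mem_nhds 0 hδpos))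
  set M : ℝ := max T1 (-T2) with hM
  set θ : ℝ := max 1 (M / R) with hθdef
  have hθpos : 0 < θ := lt_of_lt_of_le one_pos (le_max_left _ _)
  have hθR : M ≤ θ * R := by
    have : M / R ≤ θ := le_max_right _ _
    calc M = (M / R) * R := by field_simp
    _ ≤ θ * R := by nlinarith
  refine ⟨θ, 2 * R, hθpos, by linarith, ?_⟩
  -- derivative bound
  have hderbd : ∀ x ∈ Set.Icc (-R) R,
      |deriv σ (θ * (x + 2 * R)) - deriv σ (θ * (x - 2 * R)) - 1| ≤ 2 * δ := by
    intro x hx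
    obtain ⟨hx1, hx2⟩ := hx
    have hplus : T1 ≤ θ * (x + 2 * R) := by
      have h1 : M ≤ θ * (x + 2 * R) := by nlinarith [le_max_left T1 (-T2)]
      linarith [le_max_left T1 (-T2)]
    have hminus : θ * (x - 2 * R) ≤ T2 := by
      have h1 : θ * (x - 2 * R) ≤ -M := by nlinarith
      linarith [le_max_right T1 (-T2)]
    have b1 := hT1 _ hplus
    have b2 := hT2 _ hminus
    rw [Real.dist_eq] at b1 b2
    have b2' : |deriv σ (θ * (x - 2 * R))| ≤ δ := by simpa using b2
    calc |deriv σ (θ * (x + 2 * R)) - deriv σ (θ * (x - 2 * R)) - 1|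
        = |(deriv σ (θ * (x + 2 * R)) - 1) + (-(deriv σ (θ * (x - 2 * R))))| := by ring_nf
      _ ≤ |deriv σ (θ * (x + 2 * R)) - 1| + |(-(deriv σ (θ * (x - 2 * R))))| := abs_add_le _ _
      _ ≤ δ + δ := by rw [abs_neg]; exact add_le_add b1 b2'
      _ = 2 * δ := by ring
  have h2δ : 2 * δ ≤ ε / max R 1 := by
    have : 2 * δ = ε / max R 1 := by rw [hδdef]; field_simp
    exact le_of_eq this
  have hεmax : ε / max R 1 ≤ ε := by
    rw [div_le_iff₀ hmax]; nlinarith [le_max_right R 1]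
  constructor
  · -- function bound via MVT
    intro x hx
    have hconv : Convex ℝ (Set.Icc (-R : ℝ) R) := convex_Icc _ _
    have hg : ∀ y ∈ Set.Icc (-R : ℝ) R,
        HasDerivWithinAt (fun y => fclip σ θ (2 * R) y - y)
          ((fun y => deriv σ (θ * (y + 2 * R)) - deriv σ (θ * (y - 2 * R)) - 1) y)
          (Set.Icc (-R : ℝ) R) y := by
      intro y hy
      exact ((fclip_hasDerivAt σ hdiff (ne_of_gt hθpos) (2 * R) y).sub
        (hasDerivAt_id y)).hasDerivWithinAt
    have bound : ∀ y ∈ Set.Icc (-R : ℝ) R,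
        ‖(fun y => deriv σ (θ * (y + 2 * R)) - deriv σ (θ * (y - 2 * R)) - 1) y‖ ≤ 2 * δ := by
      intro y hy
      simpa [Real.norm_eq_abs] using hderbd y hy
    have h0mem : (0 : ℝ) ∈ Set.Icc (-R) R := ⟨by linarith, by linarith⟩
    have := hconv.norm_image_sub_le_of_norm_hasDerivWithin_le hg bound h0mem hx
    have hzero : fclip σ θ (2 * R) 0 - 0 = 0 := by
      rw [h0 θ (2 * R) hθpos (by linarith)]; ring
    rw [hzero, sub_zero, sub_zero, Real.norm_eq_abs, Real.norm_eq_abs] at this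
    have habs : |x| ≤ R := abs_le.mpr ⟨hx.1, hx.2⟩
    calc |fclip σ θ (2 * R) x - x| ≤ 2 * δ * |x| := this
      _ ≤ (ε / max R 1) * R := by
          apply mul_le_mul h2δ habs (abs_nonneg x) (by positivity)
      _ ≤ (ε / max R 1) * max R 1 := by
          apply mul_le_mul_of_nonneg_left (le_max_left R 1) (by positivity)
      _ = ε := by field_simp
  · intro x hx
    have hd := (fclip_hasDerivAt σ hdiff (ne_of_gt hθpos) (2 * R) x).deriv
    rw [hd]
    exact le_trans (hderbd x hx) (le_trans h2δ hεmax)
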